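/- Let (M,d) be a compact metric space, E : M → ℝ continuous, and x₀ ∈ M. For r > 0 define e(r) := min over v ∈ M of ( d²(v, x₀)/(2r) + E(v) ), and let u(r) denote any minimizer. Then for all 0 < s < t: d²(u(s), x₀)/(2·s·t) ≤ (e(s) − e(t))/(t − s) ≤ d²(u(t), x₀)/(2·s·t). -/

import Mathlib

open MeasureTheory Filter Topology

theorem stmt_3 {M : Type*} [MetricSpace M] [CompactSpace M]
    (E : M → ℝ) (hE : Continuous E) (x₀ : M)
    (u : ℝ → M)
    (hmin : ∀ r : ℝ, 0 < r → ∀ v : M,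
      dist (u r) x₀ ^ 2 / (2 * r) + E (u r) ≤ dist v x₀ ^ 2 / (2 * r) + E v)
    (e : ℝ → ℝ)
    (he : ∀ r : ℝ, 0 < r → e r = dist (u r) x₀ ^ 2 / (2 * r) + E (u r))
    (s t : ℝ) (hs : 0 < s) (hst : s < t) :
    dist (u s) x₀ ^ 2 / (2 * s * t) ≤ (e s - e t) / (t - s) ∧
    (e s - e t) / (t - s) ≤ dist (u t) x₀ ^ 2 / (2 * s * t) := by
  have ht : 0 < t := hs.trans hst
  have h1 := hmin s hs (u t)
  have h2 := hmin t ht (u s)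
  have hes := he s hs
  have het := he t ht
  have hts : 0 < t - s := by linarith
  set a := dist (u s) x₀ ^ 2
  set b := dist (u t) x₀ ^ 2
  constructor
  · rw [div_le_div_iff₀ (by positivity) hts]
    have : e s - e t ≥ a / (2 * s) - a / (2 * t) := by
      rw [hes, het]; linarith
    have key : a / (2 * s) - a / (2 * t) = a * (t - s) / (2 * s * t) := by
      field_simp
    rw [key] at this
    calc a * (t - s) = a * (t - s) / (2 * s * t) * (2 * s * t) := by
          field_simp
      _ ≤ (e s - e t) * (2 * s * t) := by
          apply mul_le_mul_of_nonneg_right (by linarith) (by positivity)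
  · rw [div_le_div_iff₀ hts (by positivity)]
    have : e s - e t ≤ b / (2 * s) - b / (2 * t) := by
      rw [hes, het]; linarith
    have key : b / (2 * s) - b / (2 * t) = b * (t - s) / (2 * s * t) := by
      field_simp
    rw [key] at this
    calc (e s - e t) * (2 * s * t) ≤ b * (t - s) / (2 * s * t) * (2 * s * t) := by
          apply mul_le_mul_of_nonneg_right this (by positivity)
      _ = b * (t - s) := by field_simp
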